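/- The second central moment Ω_n²(x) := D_n*((t−x)²; x) satisfies Ω_n²(x) = (2x/n)[1 + μ(e_μ(−nx)/e_μ(nx))(2A(−1)−A(1))/A(1)] + (1/n²)(e_μ(−nx)/e_μ(nx))[2μ(A'(1)+A'(−1))/A(1) + μ(2λ+3)(A(1)−A(−1))/A(1)] + (1/n²)[A''(1)/A(1) + 2(λ+2)A'(1)/A(1) + (λ+1)(λ+2)] + (2μ²/n²)(A(1)−A(−1))/A(1); consequently, Ω_n²(x) → 0 as n → ∞ uniformly on compact subsets of [0, ∞). -/

import Mathlib

open scoped BigOperators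
open MeasureTheory Filter

/-- Parity indicator: 0 for even, 1 for odd. -/
def theta (j : ℕ) : ℝ := if j % 2 = 1 then 1 else 0

/-- Dunkl coefficients via the recursion. -/
noncomputable def gamRec (μ : ℝ) : ℕ → ℝ
  | 0 => 1
  | k + 1 => ((k : ℝ) + 1 + 2 * μ * theta (k + 1)) * gamRec μ k

/-- Dunkl exponential. -/
noncomputable def emu (μ : ℝ) (x : ℝ) : ℝ := ∑' k : ℕ, x ^ k / gamRec μ k

/-- Dunkl-Appell polynomials. -/
noncomputable def pk (μ : ℝ) (a : ℕ → ℝ) (k : ℕ) (x : ℝ) : ℝ :=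
  ∑ j ∈ Finset.range (k + 1),
    (gamRec μ k / (gamRec μ j * gamRec μ (k - j))) * a (k - j) * x ^ j

/-- The analytic function A. -/
noncomputable def Afun (μ : ℝ) (a : ℕ → ℝ) (t : ℝ) : ℝ := ∑' r : ℕ, a r * t ^ r / gamRec μ r

/-- Dunkl-Appell Gamma-type (Szász–Durrmeyer) operator. -/
noncomputable def Dop (μ lam : ℝ) (a : ℕ → ℝ) (n : ℕ) (f : ℝ → ℝ) (x : ℝ) : ℝ :=
  (1 / (emu μ (n * x) * Afun μ a 1)) *
    ∑' k : ℕ, (pk μ a k (n * x) / gamRec μ k) *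
      ((n : ℝ) ^ ((k : ℝ) + 2 * μ * theta k + lam + 1) /
        Real.Gamma ((k : ℝ) + 2 * μ * theta k + lam + 1)) *
      ∫ t in Set.Ioi (0 : ℝ), Real.exp (-(n : ℝ) * t) * t ^ ((k : ℝ) + 2 * μ * theta k + lam) * f t

/-- Analyticity (radius of convergence > 1) hypothesis for A. -/
def AnalyticHyp (μ : ℝ) (a : ℕ → ℝ) : Prop :=
  ∃ R > (1 : ℝ), ∀ t : ℝ, |t| < R → Summable (fun r : ℕ => a r * t ^ r / gamRec μ r)

/-- Modulus of continuity on [0,∞). -/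
noncomputable def modCont (f : ℝ → ℝ) (δ : ℝ) : ℝ :=
  sSup {d : ℝ | ∃ x y : ℝ, 0 ≤ x ∧ 0 ≤ y ∧ |x - y| ≤ δ ∧ d = |f x - f y|}

/-- sup norm on [0,∞). -/
noncomputable def CBnorm (g : ℝ → ℝ) : ℝ := sSup ((fun x => |g x|) '' Set.Ici 0)

/-- Dunkl coefficients via the Gamma-function formulas of the paper. -/
noncomputable def gamG (μ : ℝ) (m : ℕ) : ℝ :=
  if m % 2 = 0 then
    2 ^ m * (Nat.factorial (m / 2)) * Real.Gamma ((m / 2 : ℕ) + μ + 1 / 2) / Real.Gamma (μ + 1 / 2)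
  else
    2 ^ m * (Nat.factorial ((m - 1) / 2)) * Real.Gamma (((m - 1) / 2 : ℕ) + μ + 3 / 2) / Real.Gamma (μ + 1 / 2)


section Aux


lemma theta_eq_half (k : ℕ) : theta k = (1 - (-1 : ℝ) ^ k) / 2 := by
  rcases Nat.even_or_odd k with h | h
  · rw [h.neg_one_pow]
    simp [theta, Nat.even_iff.mp h]
  · rw [h.neg_one_pow]
    have : k % 2 = 1 := Nat.odd_iff.mp h
    norm_num [theta, this]

lemma theta_nonneg (k : ℕ) : 0 ≤ theta k := by
  unfold theta; split <;> norm_num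

lemma theta_le_one (k : ℕ) : theta k ≤ 1 := by
  unfold theta; split <;> norm_num

/-- weight `w k = k + 2 μ θ k`. -/
noncomputable def wgt (μ : ℝ) (k : ℕ) : ℝ := (k : ℝ) + 2 * μ * theta k

lemma wgt_nonneg {μ : ℝ} (hμ : 0 ≤ μ) (k : ℕ) : 0 ≤ wgt μ k := by
  have := theta_nonneg k
  unfold wgt; positivity

lemma wgt_zero (μ : ℝ) : wgt μ 0 = 0 := by
  simp [wgt, theta]

lemma one_le_wgt_succ {μ : ℝ} (hμ : 0 ≤ μ) (k : ℕ) : 1 ≤ wgt μ (k + 1) := by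
  have h1 := theta_nonneg (k + 1)
  have : (0 : ℝ) ≤ (k : ℝ) := Nat.cast_nonneg k
  unfold wgt
  push_cast
  nlinarith

lemma wgt_le {μ : ℝ} (hμ : 0 ≤ μ) (k : ℕ) : wgt μ k ≤ (1 + 2 * μ) * ((k : ℝ) + 1) := by
  have h1 := theta_le_one k
  have h0 := theta_nonneg k
  have : (0 : ℝ) ≤ (k : ℝ) := Nat.cast_nonneg k
  unfold wgt; nlinarith

lemma gamRec_succ (μ : ℝ) (k : ℕ) : gamRec μ (k + 1) = wgt μ (k + 1) * gamRec μ k := by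
  show ((k : ℝ) + 1 + 2 * μ * theta (k + 1)) * gamRec μ k = _
  unfold wgt
  push_cast
  ring_nf

lemma gamRec_pos {μ : ℝ} (hμ : 0 ≤ μ) (k : ℕ) : 0 < gamRec μ k := by
  induction k with
  | zero => norm_num [gamRec]
  | succ k ih =>
      rw [gamRec_succ]
      exact mul_pos (lt_of_lt_of_le one_pos (one_le_wgt_succ hμ k)) ih

lemma factorial_le_gamRec {μ : ℝ} (hμ : 0 ≤ μ) (k : ℕ) :
    (Nat.factorial k : ℝ) ≤ gamRec μ k := by
  induction k with
  | zero => norm_num [gamRec, Nat.factorial]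
  | succ k ih =>
      rw [gamRec_succ]
      have h1 : ((k : ℝ) + 1) ≤ wgt μ (k + 1) := by
        have := theta_nonneg (k + 1)
        unfold wgt; push_cast; nlinarith
      have h2 : (0 : ℝ) < (k : ℝ) + 1 := by positivity
      calc (Nat.factorial (k+1) : ℝ) = ((k : ℝ) + 1) * (Nat.factorial k : ℝ) := by
            push_cast [Nat.factorial_succ]; ring
        _ ≤ wgt μ (k + 1) * gamRec μ k := by
            apply mul_le_mul h1 ih (by positivity) (le_trans h2.le h1)

lemma wgt_succ_eq {μ : ℝ} (k : ℕ) :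
    wgt μ (k + 1) = wgt μ k + 1 + 2 * μ * (-1 : ℝ) ^ k := by
  unfold wgt
  rw [theta_eq_half, theta_eq_half]
  push_cast [pow_succ]
  ring

lemma wgt_add (μ : ℝ) (r j : ℕ) :
    wgt μ (r + j) = wgt μ r + wgt μ j -
      μ * (1 - (-1 : ℝ) ^ r - (-1 : ℝ) ^ j + (-1 : ℝ) ^ r * (-1 : ℝ) ^ j) := by
  unfold wgt
  rw [theta_eq_half, theta_eq_half, theta_eq_half, pow_add]
  push_cast
  ring

/-- master summability on the `c` side. -/
lemma summable_weight_div_gamRec {μ : ℝ} (hμ : 0 ≤ μ) (P : ℕ → ℝ) (C : ℝ)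
    (hP : ∀ k, |P k| ≤ C * ((k : ℝ) + 1) ^ 2) (y : ℝ) :
    Summable (fun k => P k * (y ^ k / gamRec μ k)) := by
  rw [← summable_abs_iff]
  have hC : 0 ≤ C := by
    have h := (abs_nonneg (P 0)).trans (hP 0)
    norm_num at h
    linarith
  -- dominating sequence
  set z := |y| with hz
  have hz0 : 0 ≤ z := abs_nonneg y
  have hdom : Summable (fun (k : ℕ) => C * (((k : ℝ) + 1) ^ 2 * z ^ k / (Nat.factorial k : ℝ))) := by
    apply Summable.mul_left
    apply summable_of_ratio_norm_eventually_le (r := 1/2) (by norm_num)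
    filter_upwards [Filter.eventually_atTop.2 ⟨Nat.ceil (8 * z), fun k hk => hk⟩] with k hk
    have hkz : 8 * z ≤ (k : ℝ) := by
      calc 8 * z ≤ (Nat.ceil (8 * z) : ℝ) := Nat.le_ceil _
        _ ≤ (k : ℝ) := by exact_mod_cast hk
    have hfk : (0:ℝ) < (Nat.factorial k : ℝ) := by exact_mod_cast Nat.factorial_pos k
    rw [Real.norm_eq_abs, Real.norm_eq_abs, abs_of_nonneg (by positivity),
      abs_of_nonneg (by positivity)]
    rw [Nat.factorial_succ]
    push_cast
    rw [div_le_iff₀ (by positivity)]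
    have hzk : (0:ℝ) ≤ z ^ k := by positivity
    have key : ((k:ℝ) + 1 + 1) ^ 2 * z ≤ 1/2 * (((k:ℝ) + 1) ^ 2 * ((k:ℝ) + 1)) := by
      nlinarith [sq_nonneg ((k:ℝ) + 1), sq_nonneg ((k:ℝ) - 1)]
    calc ((k:ℝ) + 1 + 1) ^ 2 * z ^ (k + 1) = (((k:ℝ) + 1 + 1) ^ 2 * z) * z ^ k := by
          rw [pow_succ]; ring
      _ ≤ (1/2 * (((k:ℝ) + 1) ^ 2 * ((k:ℝ) + 1))) * z ^ k := by
          apply mul_le_mul_of_nonneg_right key hzk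
      _ = 1/2 * (((k:ℝ)+1) ^ 2 * z ^ k / (Nat.factorial k : ℝ)) * (((k:ℝ)+1) * (Nat.factorial k : ℝ)) := by
          field_simp
  apply hdom.of_nonneg_of_le (fun k => abs_nonneg _)
  intro k
  have hg := gamRec_pos hμ k
  have hfle := factorial_le_gamRec hμ k
  have hfk : (0:ℝ) < (Nat.factorial k : ℝ) := by exact_mod_cast Nat.factorial_pos k
  rw [abs_mul, abs_div, abs_pow, abs_of_pos hg]
  calc |P k| * (z ^ k / gamRec μ k) ≤ (C * ((k:ℝ)+1)^2) * (z ^ k / (Nat.factorial k : ℝ)) := by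
        apply mul_le_mul (hP k) _ (by positivity) (by positivity)
        apply div_le_div_of_nonneg_left (by positivity) hfk hfle
    _ = C * (((k:ℝ)+1)^2 * z ^ k / (Nat.factorial k : ℝ)) := by ring


lemma bside {μ : ℝ} (hμ : 0 ≤ μ) (a : ℕ → ℝ) (hA : AnalyticHyp μ a) :
    HasSum (fun r : ℕ => a r / gamRec μ r) (Afun μ a 1) ∧
    HasSum (fun r : ℕ => (-1 : ℝ) ^ r * (a r / gamRec μ r)) (Afun μ a (-1)) ∧
    HasSum (fun r : ℕ => (r : ℝ) * (a r / gamRec μ r)) (deriv (Afun μ a) 1) ∧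
    HasSum (fun r : ℕ => (-1 : ℝ) ^ r * (r : ℝ) * (a r / gamRec μ r))
      (-(deriv (Afun μ a) (-1))) ∧
    HasSum (fun r : ℕ => (r : ℝ) * ((r : ℝ) - 1) * (a r / gamRec μ r))
      (deriv (deriv (Afun μ a)) 1) := by
  obtain ⟨R, hR, hsum⟩ := hA
  set ρ2 : ℝ := (1 + R) / 2 with hρ2def
  set ρ : ℝ := (3 + R) / 4 with hρdef
  have hρ1 : 1 < ρ := by rw [hρdef]; linarith
  have hρρ2 : ρ < ρ2 := by rw [hρdef, hρ2def]; linarith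
  have hρ2R : ρ2 < R := by rw [hρ2def]; linarith
  have hρ0 : 0 < ρ := by linarith
  have hρ20 : 0 < ρ2 := by linarith
  clear hρdef hρ2def
  clear_value ρ ρ2
  have habs : Summable (fun r => |a r * ρ2 ^ r / gamRec μ r|) := by
    rw [summable_abs_iff]
    exact hsum ρ2 (by rw [abs_of_pos hρ20]; exact hρ2R)
  set M : ℝ := ∑' r, |a r * ρ2 ^ r / gamRec μ r| with hMdef
  have hM : ∀ r, |a r * ρ2 ^ r / gamRec μ r| ≤ M :=
    fun r => Summable.le_tsum habs r (fun j _ => abs_nonneg _)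
  have hbnd : ∀ r, |a r| / gamRec μ r ≤ M / ρ2 ^ r := by
    intro r
    have hg := gamRec_pos hμ r
    have h := hM r
    rw [abs_div, abs_mul, abs_pow, abs_of_pos hρ20, abs_of_pos hg] at h
    rw [div_le_div_iff₀ hg (by positivity)]
    calc |a r| * ρ2 ^ r = |a r| * ρ2 ^ r := rfl
      _ ≤ M * gamRec μ r := by
          rw [div_le_iff₀ hg] at h
          nlinarith [pow_pos hρ20 r, hg, h]
  have hsw : ∀ (m : ℕ), Summable (fun r : ℕ => ((r : ℝ)) ^ m * (a r / gamRec μ r)) := by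
    intro m
    rw [← summable_abs_iff]
    have hgeo : Summable (fun n : ℕ => M * ((n : ℝ) ^ m * (1 / ρ2) ^ n)) :=
      (summable_pow_mul_geometric_of_norm_lt_one m
        (by rw [Real.norm_eq_abs, abs_of_pos (by positivity)]
            rw [div_lt_iff₀ hρ20]; linarith)).mul_left M
    apply hgeo.of_nonneg_of_le (fun r => abs_nonneg _)
    intro r
    have hg := gamRec_pos hμ r
    rw [abs_mul, abs_pow, abs_div, abs_of_pos hg, Nat.abs_cast]
    have h2 : |a r| / gamRec μ r ≤ M / ρ2 ^ r := hbnd r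
    calc (r : ℝ) ^ m * (|a r| / gamRec μ r) ≤ (r : ℝ) ^ m * (M / ρ2 ^ r) := by
          apply mul_le_mul_of_nonneg_left h2 (by positivity)
      _ = M * ((r : ℝ) ^ m * (1 / ρ2) ^ r) := by
          rw [div_pow, one_pow]; ring
  have h1ball : (1 : ℝ) ∈ Metric.ball (0 : ℝ) ρ := by
    simp [Real.dist_eq]; linarith
  have hm1ball : (-1 : ℝ) ∈ Metric.ball (0 : ℝ) ρ := by
    simp [Real.dist_eq]; linarith
  -- first derivative
  have hu1 : Summable (fun n : ℕ => M * ((n : ℝ) * (ρ / ρ2) ^ n) / ρ) := by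
    have := (summable_pow_mul_geometric_of_norm_lt_one 1
      (r := ρ / ρ2) (by rw [Real.norm_eq_abs, abs_of_pos (by positivity)]
                        rw [div_lt_iff₀ hρ20]; linarith)).mul_left (M / ρ)
    apply this.congr
    intro n; rw [pow_one]; ring
  have der1 : ∀ t ∈ Metric.ball (0 : ℝ) ρ, HasDerivAt (Afun μ a)
      (∑' n : ℕ, a n * ((n : ℝ) * t ^ (n - 1)) / gamRec μ n) t := by
    intro t ht
    have key := hasDerivAt_tsum_of_isPreconnected (F := ℝ) (𝕜 := ℝ)
      (u := fun n : ℕ => M * ((n : ℝ) * (ρ / ρ2) ^ n) / ρ)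
      (g := fun n z => a n * z ^ n / gamRec μ n)
      (g' := fun n t => a n * ((n : ℝ) * t ^ (n - 1)) / gamRec μ n)
      hu1 Metric.isOpen_ball (convex_ball (0:ℝ) ρ).isPreconnected
      (fun n y _ => ((hasDerivAt_pow n y).const_mul (a n)).div_const (gamRec μ n))
      ?_ h1ball (hsum 1 (by rw [abs_one]; exact hR)) ht
    · exact key
    · intro n t' ht'
      show ‖a n * ((n:ℝ) * t' ^ (n - 1)) / gamRec μ n‖ ≤ M * ((n:ℝ) * (ρ / ρ2) ^ n) / ρ
      have hg := gamRec_pos hμ n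
      have htρ : |t'| ≤ ρ := by
        rw [Metric.mem_ball, Real.dist_eq, sub_zero] at ht'
        exact ht'.le
      rw [Real.norm_eq_abs, abs_div, abs_mul, abs_mul, Nat.abs_cast, abs_pow, abs_of_pos hg]
      rcases n with _ | m
      · simp
      · simp only [Nat.add_sub_cancel]
        push_cast
        have h1 : |a (m+1)| / gamRec μ (m+1) ≤ M / ρ2 ^ (m+1) := hbnd (m+1)
        have h2 : |t'| ^ m ≤ ρ ^ m := pow_le_pow_left₀ (abs_nonneg _) htρ m
        have hM0 : 0 ≤ M := le_trans (abs_nonneg _) (hM 0)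
        calc |a (m+1)| * (((m:ℝ)+1) * |t'| ^ m) / gamRec μ (m+1)
            = (|a (m+1)| / gamRec μ (m+1)) * (((m:ℝ)+1) * |t'| ^ m) := by
              ring
          _ ≤ (M / ρ2 ^ (m+1)) * (((m:ℝ)+1) * ρ ^ m) := by
              apply mul_le_mul h1 (by
                apply mul_le_mul_of_nonneg_left h2 (by positivity)) (by positivity)
                (by positivity)
          _ = M * (((m:ℝ)+1) * (ρ / ρ2) ^ (m+1)) / ρ := by
              rw [div_pow]
              field_simp
              push_cast
              ring
  -- second derivative of the series function
  have hu2 : Summable (fun n : ℕ => M * ((n : ℝ) ^ 2 * (ρ / ρ2) ^ n) / ρ ^ 2) := by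
    have := (summable_pow_mul_geometric_of_norm_lt_one 2
      (r := ρ / ρ2) (by rw [Real.norm_eq_abs, abs_of_pos (by positivity)]
                        rw [div_lt_iff₀ hρ20]; linarith)).mul_left (M / ρ ^ 2)
    apply this.congr
    intro n; ring
  have der2 : ∀ t ∈ Metric.ball (0 : ℝ) ρ,
      HasDerivAt (fun z => ∑' n : ℕ, a n * ((n : ℝ) * z ^ (n - 1)) / gamRec μ n)
      (∑' n : ℕ, a n * ((n : ℝ) * (((n - 1 : ℕ) : ℝ) * t ^ (n - 1 - 1))) / gamRec μ n) t := by
    intro t ht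
    have key := hasDerivAt_tsum_of_isPreconnected (F := ℝ) (𝕜 := ℝ)
      (u := fun n : ℕ => M * ((n : ℝ) ^ 2 * (ρ / ρ2) ^ n) / ρ ^ 2)
      (g := fun n z => a n * ((n : ℝ) * z ^ (n - 1)) / gamRec μ n)
      (g' := fun n t => a n * ((n : ℝ) * (((n - 1 : ℕ) : ℝ) * t ^ (n - 1 - 1))) / gamRec μ n)
      hu2 Metric.isOpen_ball (convex_ball (0:ℝ) ρ).isPreconnected
      (fun n y _ => (((hasDerivAt_pow (n-1) y).const_mul ((n:ℝ))).const_mul (a n)).div_const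
        (gamRec μ n))
      ?_ h1ball ?_ ht
    · exact key
    · intro n t' ht'
      show ‖a n * ((n:ℝ) * (((n - 1 : ℕ) : ℝ) * t' ^ (n - 1 - 1))) / gamRec μ n‖ ≤
        M * ((n:ℝ) ^ 2 * (ρ / ρ2) ^ n) / ρ ^ 2
      have hg := gamRec_pos hμ n
      have htρ : |t'| ≤ ρ := by
        rw [Metric.mem_ball, Real.dist_eq, sub_zero] at ht'
        exact ht'.le
      rw [Real.norm_eq_abs, abs_div, abs_mul, abs_mul, abs_mul, Nat.abs_cast, Nat.abs_cast,
        abs_pow, abs_of_pos hg]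
      have hM0 : 0 ≤ M := le_trans (abs_nonneg _) (hM 0)
      rcases n with _ | _ | m
      · simp
      · simp
        exact div_nonneg (mul_nonneg hM0 (by positivity)) (by positivity)
      · simp only [Nat.add_sub_cancel]
        push_cast
        have h1 : |a (m+1+1)| / gamRec μ (m+1+1) ≤ M / ρ2 ^ (m+1+1) := hbnd (m+1+1)
        have h2 : |t'| ^ m ≤ ρ ^ m := pow_le_pow_left₀ (abs_nonneg _) htρ m
        calc |a (m+1+1)| * (((m:ℝ)+1+1) * (((m:ℝ)+1) * |t'| ^ m)) / gamRec μ (m+1+1)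
            = (|a (m+1+1)| / gamRec μ (m+1+1)) * (((m:ℝ)+1+1) * (((m:ℝ)+1) * |t'| ^ m)) := by ring
          _ ≤ (M / ρ2 ^ (m+1+1)) * (((m:ℝ)+1+1) * (((m:ℝ)+1+1) * ρ ^ m)) := by
              apply mul_le_mul h1 ?_ (by positivity) (by positivity)
              apply mul_le_mul_of_nonneg_left ?_ (by positivity)
              apply mul_le_mul (by linarith) h2 (by positivity) (by positivity)
          _ = M * (((m:ℝ)+1+1) ^ 2 * (ρ / ρ2) ^ (m+1+1)) / ρ ^ 2 := by
              rw [div_pow]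
              field_simp
              ring
    · -- summable at 1
      apply (hsw 1).congr
      intro n
      show ((n:ℕ):ℝ)^1 * (a n / gamRec μ n) = a n * ((n:ℝ) * (1:ℝ)^(n-1)) / gamRec μ n
      rw [one_pow, pow_one]; ring
  -- the five HasSum results
  have hs0 : Summable (fun r : ℕ => a r / gamRec μ r) :=
    (hsum 1 (by rw [abs_one]; exact hR)).congr (fun r => by rw [one_pow, mul_one])
  have hB0 : HasSum (fun r : ℕ => a r / gamRec μ r) (Afun μ a 1) := by
    have : Afun μ a 1 = ∑' r : ℕ, a r / gamRec μ r :=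
      tsum_congr (fun r => by rw [one_pow, mul_one])
    exact this ▸ hs0.hasSum
  have hsm : Summable (fun r : ℕ => (-1:ℝ) ^ r * (a r / gamRec μ r)) :=
    (hsum (-1) (by rw [abs_neg, abs_one]; exact hR)).congr (fun r => by ring)
  have hBm : HasSum (fun r : ℕ => (-1:ℝ) ^ r * (a r / gamRec μ r)) (Afun μ a (-1)) := by
    have : Afun μ a (-1) = ∑' r : ℕ, (-1:ℝ) ^ r * (a r / gamRec μ r) :=
      tsum_congr (fun r => by ring)
    exact this ▸ hsm.hasSum
  have hs1 : Summable (fun r : ℕ => (r:ℝ) * (a r / gamRec μ r)) :=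
    (hsw 1).congr (fun r => by rw [pow_one])
  have hB1 : HasSum (fun r : ℕ => (r:ℝ) * (a r / gamRec μ r)) (deriv (Afun μ a) 1) := by
    have hval : deriv (Afun μ a) 1 = ∑' r : ℕ, (r:ℝ) * (a r / gamRec μ r) := by
      rw [(der1 1 h1ball).deriv]
      exact tsum_congr (fun n => by rw [one_pow]; ring)
    exact hval ▸ hs1.hasSum
  have hs1m : Summable (fun r : ℕ => (-1:ℝ) ^ r * (r:ℝ) * (a r / gamRec μ r)) := by
    rw [← summable_abs_iff]
    rw [← summable_abs_iff] at hs1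
    apply hs1.congr
    intro r
    rw [abs_mul, abs_mul, abs_mul, abs_pow, abs_neg, abs_one, one_pow, one_mul]
  have hB1m : HasSum (fun r : ℕ => (-1:ℝ) ^ r * (r:ℝ) * (a r / gamRec μ r))
      (-(deriv (Afun μ a) (-1))) := by
    have hval : -(deriv (Afun μ a) (-1)) = ∑' r : ℕ, (-1:ℝ) ^ r * (r:ℝ) * (a r / gamRec μ r) := by
      rw [(der1 (-1) hm1ball).deriv, ← tsum_neg]
      apply tsum_congr
      intro n
      rcases n with _ | m
      · simp
      · simp only [Nat.add_sub_cancel]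
        push_cast [pow_succ]
        ring
    exact hval ▸ hs1m.hasSum
  have hs2' : Summable (fun r : ℕ => (r:ℝ) * ((r:ℝ) - 1) * (a r / gamRec μ r)) := by
    apply ((hsw 2).sub (hsw 1)).congr
    intro r
    ring
  have hB2 : HasSum (fun r : ℕ => (r:ℝ) * ((r:ℝ) - 1) * (a r / gamRec μ r))
      (deriv (deriv (Afun μ a)) 1) := by
    have hEv : deriv (Afun μ a) =ᶠ[nhds (1:ℝ)]
        (fun z => ∑' n : ℕ, a n * ((n : ℝ) * z ^ (n - 1)) / gamRec μ n) := by
      apply Filter.eventuallyEq_of_mem (Metric.isOpen_ball.mem_nhds h1ball)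
      intro t ht
      exact (der1 t ht).deriv
    have hval : deriv (deriv (Afun μ a)) 1
        = ∑' r : ℕ, (r:ℝ) * ((r:ℝ) - 1) * (a r / gamRec μ r) := by
      rw [hEv.deriv_eq, (der2 1 h1ball).deriv]
      apply tsum_congr
      intro n
      rcases n with _ | m
      · simp
      · simp only [Nat.add_sub_cancel]
        push_cast
        rw [one_pow]
        ring
    exact hval ▸ hs2'.hasSum
  exact ⟨hB0, hBm, hB1, hB1m, hB2⟩


lemma cside {μ : ℝ} (hμ : 0 ≤ μ) (y : ℝ) :
    HasSum (fun k : ℕ => y ^ k / gamRec μ k) (emu μ y) ∧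
    HasSum (fun k : ℕ => (-1 : ℝ) ^ k * (y ^ k / gamRec μ k)) (emu μ (-y)) ∧
    HasSum (fun k : ℕ => wgt μ k * (y ^ k / gamRec μ k)) (y * emu μ y) ∧
    HasSum (fun k : ℕ => (-1 : ℝ) ^ k * wgt μ k * (y ^ k / gamRec μ k))
      ((-y) * emu μ (-y)) ∧
    HasSum (fun k : ℕ => wgt μ k ^ 2 * (y ^ k / gamRec μ k))
      (y * (y * emu μ y) + (y * emu μ y + 2 * μ * y * emu μ (-y))) := by
  have hs0 : Summable (fun k : ℕ => y ^ k / gamRec μ k) := by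
    apply (summable_weight_div_gamRec hμ (fun _ => 1) 1
      (fun k => by rw [abs_one]; nlinarith [Nat.cast_nonneg (α := ℝ) k]) y).congr
    intro k; rw [one_mul]
  have hC0 : HasSum (fun k : ℕ => y ^ k / gamRec μ k) (emu μ y) := hs0.hasSum
  have hsm : Summable (fun k : ℕ => (-y) ^ k / gamRec μ k) := by
    apply (summable_weight_div_gamRec hμ (fun k => (-1 : ℝ) ^ k) 1
      (fun k => by rw [abs_pow, abs_neg, abs_one, one_pow, one_mul]
                   nlinarith [Nat.cast_nonneg (α := ℝ) k]) y).congr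
    intro k; rw [neg_pow]; ring
  have hCm : HasSum (fun k : ℕ => (-1 : ℝ) ^ k * (y ^ k / gamRec μ k)) (emu μ (-y)) := by
    have h1 : emu μ (-y) = ∑' k : ℕ, (-1 : ℝ) ^ k * (y ^ k / gamRec μ k) := by
      apply tsum_congr
      intro k; rw [neg_pow]; ring
    have hsm' : Summable (fun k : ℕ => (-1 : ℝ) ^ k * (y ^ k / gamRec μ k)) := by
      apply hsm.congr; intro k; rw [neg_pow]; ring
    exact h1 ▸ hsm'.hasSum
  have hwne : ∀ k : ℕ, wgt μ (k + 1) ≠ 0 :=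
    fun k => ne_of_gt (lt_of_lt_of_le one_pos (one_le_wgt_succ hμ k))
  have hshift : ∀ k : ℕ, wgt μ (k + 1) * (y ^ (k + 1) / gamRec μ (k + 1))
      = y * (y ^ k / gamRec μ k) := by
    intro k
    have hg := gamRec_pos hμ k
    rw [gamRec_succ, pow_succ]
    field_simp [hwne k, hg.ne']
  have hC1 : HasSum (fun k : ℕ => wgt μ k * (y ^ k / gamRec μ k)) (y * emu μ y) := by
    have h2 : HasSum (fun k : ℕ => wgt μ (k + 1) * (y ^ (k + 1) / gamRec μ (k + 1)))
        (y * emu μ y) := by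
      have hfe : (fun k : ℕ => wgt μ (k + 1) * (y ^ (k + 1) / gamRec μ (k + 1)))
          = (fun k : ℕ => y * (y ^ k / gamRec μ k)) := funext (fun k => hshift k)
      rw [hfe]
      exact hC0.mul_left y
    have h3 := (hasSum_nat_add_iff (f := fun k : ℕ => wgt μ k * (y ^ k / gamRec μ k)) 1).mp h2
    simpa [Finset.sum_range_one, wgt_zero] using h3
  have hC1m : HasSum (fun k : ℕ => (-1 : ℝ) ^ k * wgt μ k * (y ^ k / gamRec μ k))
      ((-y) * emu μ (-y)) := by
    have h2 : HasSum (fun k : ℕ =>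
        (-1 : ℝ) ^ (k + 1) * wgt μ (k + 1) * (y ^ (k + 1) / gamRec μ (k + 1)))
        ((-y) * emu μ (-y)) := by
      have hfe : (fun k : ℕ =>
          (-1 : ℝ) ^ (k + 1) * wgt μ (k + 1) * (y ^ (k + 1) / gamRec μ (k + 1)))
          = (fun k : ℕ => (-y) * ((-1 : ℝ) ^ k * (y ^ k / gamRec μ k))) := by
        funext k
        rw [mul_assoc, hshift k, pow_succ]
        ring
      rw [hfe]
      exact hCm.mul_left (-y)
    have h3 := (hasSum_nat_add_iff
      (f := fun k : ℕ => (-1 : ℝ) ^ k * wgt μ k * (y ^ k / gamRec μ k)) 1).mp h2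
    simpa [Finset.sum_range_one, wgt_zero] using h3
  have hC2 : HasSum (fun k : ℕ => wgt μ k ^ 2 * (y ^ k / gamRec μ k))
      (y * (y * emu μ y) + (y * emu μ y + 2 * μ * y * emu μ (-y))) := by
    have h2 : HasSum (fun k : ℕ => wgt μ (k + 1) ^ 2 * (y ^ (k + 1) / gamRec μ (k + 1)))
        (y * (y * emu μ y) + (y * emu μ y + 2 * μ * y * emu μ (-y))) := by
      have hfe : (fun k : ℕ => wgt μ (k + 1) ^ 2 * (y ^ (k + 1) / gamRec μ (k + 1)))
          = (fun k : ℕ => y * (wgt μ k * (y ^ k / gamRec μ k))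
              + (y * (y ^ k / gamRec μ k)
                + 2 * μ * y * ((-1 : ℝ) ^ k * (y ^ k / gamRec μ k)))) := by
        funext k
        rw [pow_two, mul_assoc, hshift k, wgt_succ_eq]
        ring
      rw [hfe]
      exact (hC1.mul_left y).add ((hC0.mul_left y).add (hCm.mul_left (2 * μ * y)))
    have h3 := (hasSum_nat_add_iff
      (f := fun k : ℕ => wgt μ k ^ 2 * (y ^ k / gamRec μ k)) 1).mp h2
    simpa [Finset.sum_range_one, wgt_zero] using h3
  exact ⟨hC0, hCm, hC1, hC1m, hC2⟩


lemma integral_eval {n : ℕ} (hn : 1 ≤ n) (x c : ℝ) (hc : 0 ≤ c) :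
    ∫ t in Set.Ioi (0 : ℝ), Real.exp (-(n : ℝ) * t) * t ^ c * (t - x) ^ 2
    = ((c + 1) * (c + 2) / (n : ℝ) ^ 2 - 2 * x * (c + 1) / (n : ℝ) + x ^ 2) *
      (Real.Gamma (c + 1) / (n : ℝ) ^ (c + 1)) := by
  have hn0 : (0 : ℝ) < (n : ℝ) := by exact_mod_cast hn
  have hint : ∀ p : ℝ, 0 < p →
      IntegrableOn (fun t : ℝ => t ^ (p - 1) * Real.exp (-(n : ℝ) * t)) (Set.Ioi 0) := by
    intro p hp
    have := integrableOn_rpow_mul_exp_neg_mul_rpow (p := 1) (s := p - 1) (b := (n : ℝ))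
      (by linarith) zero_lt_one hn0
    simpa [Real.rpow_one] using this
  have hval : ∀ p : ℝ, 0 < p →
      (∫ t in Set.Ioi (0 : ℝ), t ^ (p - 1) * Real.exp (-((n : ℝ) * t)))
        = (1 / (n : ℝ)) ^ p * Real.Gamma p :=
    fun p hp => Real.integral_rpow_mul_exp_neg_mul_Ioi hp hn0
  have hcongr : ∫ t in Set.Ioi (0 : ℝ), Real.exp (-(n : ℝ) * t) * t ^ c * (t - x) ^ 2
      = ∫ t in Set.Ioi (0 : ℝ),
          (t ^ (c + 3 - 1) * Real.exp (-(n : ℝ) * t)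
            - 2 * x * (t ^ (c + 2 - 1) * Real.exp (-(n : ℝ) * t))
            + x ^ 2 * (t ^ (c + 1 - 1) * Real.exp (-(n : ℝ) * t))) := by
    apply setIntegral_congr_fun measurableSet_Ioi
    intro t ht
    dsimp only
    have ht0 : (0 : ℝ) < t := ht
    have h2 : t ^ (c + 3 - 1) = t ^ c * t ^ 2 := by
      rw [show c + 3 - 1 = c + 2 by ring, Real.rpow_add ht0,
        show (2 : ℝ) = ((2 : ℕ) : ℝ) by norm_num, Real.rpow_natCast]
    have h1 : t ^ (c + 2 - 1) = t ^ c * t := by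
      rw [show c + 2 - 1 = c + 1 by ring, Real.rpow_add ht0, Real.rpow_one]
    have h0 : t ^ (c + 1 - 1) = t ^ c := by
      rw [show c + 1 - 1 = c by ring]
    rw [h2, h1, h0]
    ring
  rw [hcongr]
  rw [integral_add
    (f := fun t : ℝ => t ^ (c+3-1) * Real.exp (-(n:ℝ)*t)
      - 2*x*(t ^ (c+2-1) * Real.exp (-(n:ℝ)*t)))
    (g := fun t : ℝ => x^2*(t ^ (c+1-1) * Real.exp (-(n:ℝ)*t)))
    ((hint (c+3) (by linarith)).sub ((hint (c+2) (by linarith)).const_mul (2*x)))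
    ((hint (c+1) (by linarith)).const_mul (x^2))]
  rw [integral_sub
    (f := fun t : ℝ => t ^ (c+3-1) * Real.exp (-(n:ℝ)*t))
    (g := fun t : ℝ => 2*x*(t ^ (c+2-1) * Real.exp (-(n:ℝ)*t)))
    (hint (c+3) (by linarith))
    ((hint (c+2) (by linarith)).const_mul (2*x))]
  rw [integral_const_mul, integral_const_mul]
  have e3 := hval (c+3) (by linarith)
  have e2 := hval (c+2) (by linarith)
  have e1 := hval (c+1) (by linarith)
  simp only [neg_mul] at e3 e2 e1 ⊢
  rw [e3, e2, e1]
  have hΓ2 : Real.Gamma (c + 2) = (c + 1) * Real.Gamma (c + 1) := by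
    rw [show c + 2 = (c + 1) + 1 by ring, Real.Gamma_add_one (by positivity)]
  have hΓ3 : Real.Gamma (c + 3) = (c + 2) * ((c + 1) * Real.Gamma (c + 1)) := by
    rw [show c + 3 = (c + 2) + 1 by ring, Real.Gamma_add_one (by positivity), hΓ2]
  have hr3 : (1 / (n : ℝ)) ^ (c + 3) = (1 / (n : ℝ)) ^ (c + 1) * (1 / (n : ℝ)) ^ 2 := by
    rw [show c + 3 = (c + 1) + 2 by ring, Real.rpow_add (by positivity),
      show (2 : ℝ) = ((2 : ℕ) : ℝ) by norm_num, Real.rpow_natCast]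
  have hr2 : (1 / (n : ℝ)) ^ (c + 2) = (1 / (n : ℝ)) ^ (c + 1) * (1 / (n : ℝ)) := by
    rw [show c + 2 = (c + 1) + 1 by ring, Real.rpow_add (by positivity), Real.rpow_one]
  have hr1 : (1 / (n : ℝ)) ^ (c + 1) = 1 / (n : ℝ) ^ (c + 1) := by
    rw [one_div, Real.inv_rpow hn0.le, ← one_div]
  rw [hΓ3, hΓ2, hr3, hr2, hr1]
  have hne : (n : ℝ) ^ (c + 1) ≠ 0 := ne_of_gt (Real.rpow_pos_of_pos hn0 _)
  field_simp


end Aux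

set_option maxHeartbeats 2000000 in
theorem Dop_second_central_moment (μ lam : ℝ) (hμ : 0 ≤ μ) (hlam : 0 ≤ lam)
    (a : ℕ → ℝ) (ha0 : a 0 ≠ 0) (hA : AnalyticHyp μ a) (hA1 : Afun μ a 1 ≠ 0)
    (hpos : ∀ r : ℕ, 0 ≤ a r / Afun μ a 1) :
    (∀ n : ℕ, 1 ≤ n → ∀ x : ℝ, 0 ≤ x →
      Dop μ lam a n (fun t => (t - x) ^ 2) x =
        (2 * x / n) * (1 + μ * (emu μ (-(n * x)) / emu μ (n * x)) *
            ((2 * Afun μ a (-1) - Afun μ a 1) / Afun μ a 1)) +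
        (1 / (n : ℝ) ^ 2) * (emu μ (-(n * x)) / emu μ (n * x)) *
          (2 * μ * ((deriv (Afun μ a) 1 + deriv (Afun μ a) (-1)) / Afun μ a 1) +
            μ * (2 * lam + 3) * ((Afun μ a 1 - Afun μ a (-1)) / Afun μ a 1)) +
        (1 / (n : ℝ) ^ 2) * (deriv (deriv (Afun μ a)) 1 / Afun μ a 1 +
          2 * (lam + 2) * (deriv (Afun μ a) 1 / Afun μ a 1) + (lam + 1) * (lam + 2)) +
        (2 * μ ^ 2 / (n : ℝ) ^ 2) * ((Afun μ a 1 - Afun μ a (-1)) / Afun μ a 1)) ∧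
    (∀ K : Set ℝ, K ⊆ Set.Ici 0 → IsCompact K →
      TendstoUniformlyOn (fun (n : ℕ) (x : ℝ) => Dop μ lam a n (fun t => (t - x) ^ 2) x) 0
        atTop K) := by
  have hkey : ∀ n : ℕ, 1 ≤ n → ∀ x : ℝ, 0 ≤ x →
      Dop μ lam a n (fun t => (t - x) ^ 2) x =
        (2 * x / n) * (1 + μ * (emu μ (-(n * x)) / emu μ (n * x)) *
            ((2 * Afun μ a (-1) - Afun μ a 1) / Afun μ a 1)) +
        (1 / (n : ℝ) ^ 2) * (emu μ (-(n * x)) / emu μ (n * x)) *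
          (2 * μ * ((deriv (Afun μ a) 1 + deriv (Afun μ a) (-1)) / Afun μ a 1) +
            μ * (2 * lam + 3) * ((Afun μ a 1 - Afun μ a (-1)) / Afun μ a 1)) +
        (1 / (n : ℝ) ^ 2) * (deriv (deriv (Afun μ a)) 1 / Afun μ a 1 +
          2 * (lam + 2) * (deriv (Afun μ a) 1 / Afun μ a 1) + (lam + 1) * (lam + 2)) +
        (2 * μ ^ 2 / (n : ℝ) ^ 2) * ((Afun μ a 1 - Afun μ a (-1)) / Afun μ a 1) := by
    obtain ⟨hG0, hG3, hB1, hB1m, hB2⟩ := bside hμ a hA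
    intro n hn x hx
    have hn0 : (0:ℝ) < (n:ℝ) := by exact_mod_cast hn
    have hnx : (0:ℝ) ≤ (n:ℝ) * x := by positivity
    obtain ⟨hF0, hF3, hF1, hF4, hF2⟩ := cside hμ ((n:ℝ) * x)
    have hG1 : HasSum (fun r : ℕ => wgt μ r * (a r / gamRec μ r))
        (deriv (Afun μ a) 1 + μ * Afun μ a 1 - μ * Afun μ a (-1)) := by
      have h := (hB1.add (hG0.mul_left μ)).sub (hG3.mul_left μ)
      have hfe : (fun r : ℕ => ((r:ℝ) * (a r / gamRec μ r) + μ * (a r / gamRec μ r))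
          - μ * ((-1:ℝ)^r * (a r / gamRec μ r)))
          = (fun r : ℕ => wgt μ r * (a r / gamRec μ r)) := by
        funext r; rw [wgt, theta_eq_half]; ring
      rw [← hfe]; exact h
    have hG2 : HasSum (fun r : ℕ => wgt μ r ^ 2 * (a r / gamRec μ r))
        (deriv (deriv (Afun μ a)) 1 + deriv (Afun μ a) 1 + 2 * μ * deriv (Afun μ a) 1
          - 2 * μ * -deriv (Afun μ a) (-1) + 2 * μ ^ 2 * Afun μ a 1
          - 2 * μ ^ 2 * Afun μ a (-1)) := by
      have h := ((((hB2.add hB1).add (hB1.mul_left (2*μ))).sub (hB1m.mul_left (2*μ))).add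
        (hG0.mul_left (2*μ^2))).sub (hG3.mul_left (2*μ^2))
      have hfe : (fun r : ℕ => (((((r:ℝ) * ((r:ℝ) - 1) * (a r / gamRec μ r)
          + (r:ℝ) * (a r / gamRec μ r)) + 2*μ * ((r:ℝ) * (a r / gamRec μ r)))
          - 2*μ * ((-1:ℝ)^r * (r:ℝ) * (a r / gamRec μ r)))
          + 2*μ^2 * (a r / gamRec μ r)) - 2*μ^2 * ((-1:ℝ)^r * (a r / gamRec μ r)))
          = (fun r : ℕ => wgt μ r ^ 2 * (a r / gamRec μ r)) := by
        funext r; rw [wgt, theta_eq_half]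
        rcases Nat.even_or_odd r with hr | hr <;> rw [hr.neg_one_pow] <;> ring
      rw [← hfe]; exact h
    have hG4 : HasSum (fun r : ℕ => (-1:ℝ)^r * wgt μ r * (a r / gamRec μ r))
        (-deriv (Afun μ a) (-1) + μ * Afun μ a (-1) - μ * Afun μ a 1) := by
      have h := (hB1m.add (hG3.mul_left μ)).sub (hG0.mul_left μ)
      have hfe : (fun r : ℕ => ((-1:ℝ)^r * (r:ℝ) * (a r / gamRec μ r)
          + μ * ((-1:ℝ)^r * (a r / gamRec μ r))) - μ * (a r / gamRec μ r))
          = (fun r : ℕ => (-1:ℝ)^r * wgt μ r * (a r / gamRec μ r)) := by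
        funext r; rw [wgt, theta_eq_half]
        rcases Nat.even_or_odd r with hr | hr <;> rw [hr.neg_one_pow] <;> ring
      rw [← hfe]; exact h
    have hgrid : ∀ r j : ℕ, (a r / gamRec μ r * ((↑n * x) ^ j / gamRec μ j)) * ((1 / (n:ℝ)^2) * wgt μ (r + j) ^ 2 + ((2*lam+3)/(n:ℝ)^2 - 2*x/(n:ℝ)) * wgt μ (r + j) + ((lam+1)*(lam+2)/(n:ℝ)^2 - 2*x*(lam+1)/(n:ℝ) + x^2))
        = ((↑n * x) ^ j / gamRec μ j) * ((((lam+1)*(lam+2)/(n:ℝ)^2 - 2*x*(lam+1)/(n:ℝ) + x^2) - ((2*lam+3)/(n:ℝ)^2 - 2*x/(n:ℝ))*μ + 4*(1 / (n:ℝ)^2)*μ^2) * (a r / gamRec μ r))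
        + ((-1 : ℝ) ^ j * ((↑n * x) ^ j / gamRec μ j)) * ((((2*lam+3)/(n:ℝ)^2 - 2*x/(n:ℝ))*μ - 4*(1 / (n:ℝ)^2)*μ^2) * (a r / gamRec μ r))
        + (wgt μ j * ((↑n * x) ^ j / gamRec μ j)) * ((((2*lam+3)/(n:ℝ)^2 - 2*x/(n:ℝ)) - 2*(1 / (n:ℝ)^2)*μ) * (a r / gamRec μ r))
        + ((-1 : ℝ) ^ j * wgt μ j * ((↑n * x) ^ j / gamRec μ j)) * ((2*(1 / (n:ℝ)^2)*μ) * (a r / gamRec μ r))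
        + (wgt μ j ^ 2 * ((↑n * x) ^ j / gamRec μ j)) * (((1 / (n:ℝ)^2)) * (a r / gamRec μ r))
        + ((↑n * x) ^ j / gamRec μ j) * ((((2*lam+3)/(n:ℝ)^2 - 2*x/(n:ℝ))*μ - 4*(1 / (n:ℝ)^2)*μ^2) * ((-1 : ℝ) ^ r * (a r / gamRec μ r)))
        + ((-1 : ℝ) ^ j * ((↑n * x) ^ j / gamRec μ j)) * ((-(((2*lam+3)/(n:ℝ)^2 - 2*x/(n:ℝ))*μ) + 4*(1 / (n:ℝ)^2)*μ^2) * ((-1 : ℝ) ^ r * (a r / gamRec μ r)))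
        + (wgt μ j * ((↑n * x) ^ j / gamRec μ j)) * ((2*(1 / (n:ℝ)^2)*μ) * ((-1 : ℝ) ^ r * (a r / gamRec μ r)))
        + ((-1 : ℝ) ^ j * wgt μ j * ((↑n * x) ^ j / gamRec μ j)) * ((-(2*(1 / (n:ℝ)^2)*μ)) * ((-1 : ℝ) ^ r * (a r / gamRec μ r)))
        + ((↑n * x) ^ j / gamRec μ j) * ((((2*lam+3)/(n:ℝ)^2 - 2*x/(n:ℝ)) - 2*(1 / (n:ℝ)^2)*μ) * (wgt μ r * (a r / gamRec μ r)))
        + ((-1 : ℝ) ^ j * ((↑n * x) ^ j / gamRec μ j)) * ((2*(1 / (n:ℝ)^2)*μ) * (wgt μ r * (a r / gamRec μ r)))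
        + (wgt μ j * ((↑n * x) ^ j / gamRec μ j)) * ((2*(1 / (n:ℝ)^2)) * (wgt μ r * (a r / gamRec μ r)))
        + ((↑n * x) ^ j / gamRec μ j) * ((2*(1 / (n:ℝ)^2)*μ) * ((-1 : ℝ) ^ r * wgt μ r * (a r / gamRec μ r)))
        + ((-1 : ℝ) ^ j * ((↑n * x) ^ j / gamRec μ j)) * ((-(2*(1 / (n:ℝ)^2)*μ)) * ((-1 : ℝ) ^ r * wgt μ r * (a r / gamRec μ r)))
        + ((↑n * x) ^ j / gamRec μ j) * (((1 / (n:ℝ)^2)) * (wgt μ r ^ 2 * (a r / gamRec μ r))) := by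
      intro r j
      rw [wgt_add]
      rcases Nat.even_or_odd r with hr | hr <;>
        rcases Nat.even_or_odd j with hj | hj <;>
          simp only [hr.neg_one_pow, hj.neg_one_pow] <;> ring
    have hP0 : HasSum (fun k : ℕ => ∑ j ∈ Finset.range (k + 1),
        ((↑n * x) ^ j / gamRec μ j) * ((((lam+1)*(lam+2)/(n:ℝ)^2 - 2*x*(lam+1)/(n:ℝ) + x^2) - ((2*lam+3)/(n:ℝ)^2 - 2*x/(n:ℝ))*μ + 4*(1 / (n:ℝ)^2)*μ^2) * (a (k - j) / gamRec μ (k - j))))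
        ((emu μ (↑n * x)) * ((((lam+1)*(lam+2)/(n:ℝ)^2 - 2*x*(lam+1)/(n:ℝ) + x^2) - ((2*lam+3)/(n:ℝ)^2 - 2*x/(n:ℝ))*μ + 4*(1 / (n:ℝ)^2)*μ^2) * (Afun μ a 1))) := by
      have h := hasSum_sum_range_mul_of_summable_norm
        (f := fun j : ℕ => (↑n * x) ^ j / gamRec μ j)
        (g := fun r : ℕ => (((lam+1)*(lam+2)/(n:ℝ)^2 - 2*x*(lam+1)/(n:ℝ) + x^2) - ((2*lam+3)/(n:ℝ)^2 - 2*x/(n:ℝ))*μ + 4*(1 / (n:ℝ)^2)*μ^2) * (a r / gamRec μ r))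
        (by simp only [Real.norm_eq_abs]
            exact summable_abs_iff.mpr hF0.summable)
        (by simp only [Real.norm_eq_abs]
            exact summable_abs_iff.mpr (hG0.summable.mul_left _))
      rwa [hF0.tsum_eq, (hG0.mul_left (((lam+1)*(lam+2)/(n:ℝ)^2 - 2*x*(lam+1)/(n:ℝ) + x^2) - ((2*lam+3)/(n:ℝ)^2 - 2*x/(n:ℝ))*μ + 4*(1 / (n:ℝ)^2)*μ^2)).tsum_eq] at h
    have hP1 : HasSum (fun k : ℕ => ∑ j ∈ Finset.range (k + 1),
        ((-1 : ℝ) ^ j * ((↑n * x) ^ j / gamRec μ j)) * ((((2*lam+3)/(n:ℝ)^2 - 2*x/(n:ℝ))*μ - 4*(1 / (n:ℝ)^2)*μ^2) * (a (k - j) / gamRec μ (k - j))))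
        ((emu μ (-(↑n * x))) * ((((2*lam+3)/(n:ℝ)^2 - 2*x/(n:ℝ))*μ - 4*(1 / (n:ℝ)^2)*μ^2) * (Afun μ a 1))) := by
      have h := hasSum_sum_range_mul_of_summable_norm
        (f := fun j : ℕ => (-1 : ℝ) ^ j * ((↑n * x) ^ j / gamRec μ j))
        (g := fun r : ℕ => (((2*lam+3)/(n:ℝ)^2 - 2*x/(n:ℝ))*μ - 4*(1 / (n:ℝ)^2)*μ^2) * (a r / gamRec μ r))
        (by simp only [Real.norm_eq_abs]
            exact summable_abs_iff.mpr hF3.summable)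
        (by simp only [Real.norm_eq_abs]
            exact summable_abs_iff.mpr (hG0.summable.mul_left _))
      rwa [hF3.tsum_eq, (hG0.mul_left (((2*lam+3)/(n:ℝ)^2 - 2*x/(n:ℝ))*μ - 4*(1 / (n:ℝ)^2)*μ^2)).tsum_eq] at h
    have hP2 : HasSum (fun k : ℕ => ∑ j ∈ Finset.range (k + 1),
        (wgt μ j * ((↑n * x) ^ j / gamRec μ j)) * ((((2*lam+3)/(n:ℝ)^2 - 2*x/(n:ℝ)) - 2*(1 / (n:ℝ)^2)*μ) * (a (k - j) / gamRec μ (k - j))))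
        ((↑n * x * emu μ (↑n * x)) * ((((2*lam+3)/(n:ℝ)^2 - 2*x/(n:ℝ)) - 2*(1 / (n:ℝ)^2)*μ) * (Afun μ a 1))) := by
      have h := hasSum_sum_range_mul_of_summable_norm
        (f := fun j : ℕ => wgt μ j * ((↑n * x) ^ j / gamRec μ j))
        (g := fun r : ℕ => (((2*lam+3)/(n:ℝ)^2 - 2*x/(n:ℝ)) - 2*(1 / (n:ℝ)^2)*μ) * (a r / gamRec μ r))
        (by simp only [Real.norm_eq_abs]
            exact summable_abs_iff.mpr hF1.summable)
        (by simp only [Real.norm_eq_abs]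
            exact summable_abs_iff.mpr (hG0.summable.mul_left _))
      rwa [hF1.tsum_eq, (hG0.mul_left (((2*lam+3)/(n:ℝ)^2 - 2*x/(n:ℝ)) - 2*(1 / (n:ℝ)^2)*μ)).tsum_eq] at h
    have hP3 : HasSum (fun k : ℕ => ∑ j ∈ Finset.range (k + 1),
        ((-1 : ℝ) ^ j * wgt μ j * ((↑n * x) ^ j / gamRec μ j)) * ((2*(1 / (n:ℝ)^2)*μ) * (a (k - j) / gamRec μ (k - j))))
        ((-(↑n * x) * emu μ (-(↑n * x))) * ((2*(1 / (n:ℝ)^2)*μ) * (Afun μ a 1))) := by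
      have h := hasSum_sum_range_mul_of_summable_norm
        (f := fun j : ℕ => (-1 : ℝ) ^ j * wgt μ j * ((↑n * x) ^ j / gamRec μ j))
        (g := fun r : ℕ => (2*(1 / (n:ℝ)^2)*μ) * (a r / gamRec μ r))
        (by simp only [Real.norm_eq_abs]
            exact summable_abs_iff.mpr hF4.summable)
        (by simp only [Real.norm_eq_abs]
            exact summable_abs_iff.mpr (hG0.summable.mul_left _))
      rwa [hF4.tsum_eq, (hG0.mul_left (2*(1 / (n:ℝ)^2)*μ)).tsum_eq] at h
    have hP4 : HasSum (fun k : ℕ => ∑ j ∈ Finset.range (k + 1),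
        (wgt μ j ^ 2 * ((↑n * x) ^ j / gamRec μ j)) * (((1 / (n:ℝ)^2)) * (a (k - j) / gamRec μ (k - j))))
        ((↑n * x * (↑n * x * emu μ (↑n * x)) + (↑n * x * emu μ (↑n * x) + 2 * μ * (↑n * x) * emu μ (-(↑n * x)))) * (((1 / (n:ℝ)^2)) * (Afun μ a 1))) := by
      have h := hasSum_sum_range_mul_of_summable_norm
        (f := fun j : ℕ => wgt μ j ^ 2 * ((↑n * x) ^ j / gamRec μ j))
        (g := fun r : ℕ => ((1 / (n:ℝ)^2)) * (a r / gamRec μ r))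
        (by simp only [Real.norm_eq_abs]
            exact summable_abs_iff.mpr hF2.summable)
        (by simp only [Real.norm_eq_abs]
            exact summable_abs_iff.mpr (hG0.summable.mul_left _))
      rwa [hF2.tsum_eq, (hG0.mul_left ((1 / (n:ℝ)^2))).tsum_eq] at h
    have hP5 : HasSum (fun k : ℕ => ∑ j ∈ Finset.range (k + 1),
        ((↑n * x) ^ j / gamRec μ j) * ((((2*lam+3)/(n:ℝ)^2 - 2*x/(n:ℝ))*μ - 4*(1 / (n:ℝ)^2)*μ^2) * ((-1 : ℝ) ^ (k - j) * (a (k - j) / gamRec μ (k - j)))))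
        ((emu μ (↑n * x)) * ((((2*lam+3)/(n:ℝ)^2 - 2*x/(n:ℝ))*μ - 4*(1 / (n:ℝ)^2)*μ^2) * (Afun μ a (-1)))) := by
      have h := hasSum_sum_range_mul_of_summable_norm
        (f := fun j : ℕ => (↑n * x) ^ j / gamRec μ j)
        (g := fun r : ℕ => (((2*lam+3)/(n:ℝ)^2 - 2*x/(n:ℝ))*μ - 4*(1 / (n:ℝ)^2)*μ^2) * ((-1 : ℝ) ^ r * (a r / gamRec μ r)))
        (by simp only [Real.norm_eq_abs]
            exact summable_abs_iff.mpr hF0.summable)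
        (by simp only [Real.norm_eq_abs]
            exact summable_abs_iff.mpr (hG3.summable.mul_left _))
      rwa [hF0.tsum_eq, (hG3.mul_left (((2*lam+3)/(n:ℝ)^2 - 2*x/(n:ℝ))*μ - 4*(1 / (n:ℝ)^2)*μ^2)).tsum_eq] at h
    have hP6 : HasSum (fun k : ℕ => ∑ j ∈ Finset.range (k + 1),
        ((-1 : ℝ) ^ j * ((↑n * x) ^ j / gamRec μ j)) * ((-(((2*lam+3)/(n:ℝ)^2 - 2*x/(n:ℝ))*μ) + 4*(1 / (n:ℝ)^2)*μ^2) * ((-1 : ℝ) ^ (k - j) * (a (k - j) / gamRec μ (k - j)))))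
        ((emu μ (-(↑n * x))) * ((-(((2*lam+3)/(n:ℝ)^2 - 2*x/(n:ℝ))*μ) + 4*(1 / (n:ℝ)^2)*μ^2) * (Afun μ a (-1)))) := by
      have h := hasSum_sum_range_mul_of_summable_norm
        (f := fun j : ℕ => (-1 : ℝ) ^ j * ((↑n * x) ^ j / gamRec μ j))
        (g := fun r : ℕ => (-(((2*lam+3)/(n:ℝ)^2 - 2*x/(n:ℝ))*μ) + 4*(1 / (n:ℝ)^2)*μ^2) * ((-1 : ℝ) ^ r * (a r / gamRec μ r)))
        (by simp only [Real.norm_eq_abs]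
            exact summable_abs_iff.mpr hF3.summable)
        (by simp only [Real.norm_eq_abs]
            exact summable_abs_iff.mpr (hG3.summable.mul_left _))
      rwa [hF3.tsum_eq, (hG3.mul_left (-(((2*lam+3)/(n:ℝ)^2 - 2*x/(n:ℝ))*μ) + 4*(1 / (n:ℝ)^2)*μ^2)).tsum_eq] at h
    have hP7 : HasSum (fun k : ℕ => ∑ j ∈ Finset.range (k + 1),
        (wgt μ j * ((↑n * x) ^ j / gamRec μ j)) * ((2*(1 / (n:ℝ)^2)*μ) * ((-1 : ℝ) ^ (k - j) * (a (k - j) / gamRec μ (k - j)))))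
        ((↑n * x * emu μ (↑n * x)) * ((2*(1 / (n:ℝ)^2)*μ) * (Afun μ a (-1)))) := by
      have h := hasSum_sum_range_mul_of_summable_norm
        (f := fun j : ℕ => wgt μ j * ((↑n * x) ^ j / gamRec μ j))
        (g := fun r : ℕ => (2*(1 / (n:ℝ)^2)*μ) * ((-1 : ℝ) ^ r * (a r / gamRec μ r)))
        (by simp only [Real.norm_eq_abs]
            exact summable_abs_iff.mpr hF1.summable)
        (by simp only [Real.norm_eq_abs]
            exact summable_abs_iff.mpr (hG3.summable.mul_left _))
      rwa [hF1.tsum_eq, (hG3.mul_left (2*(1 / (n:ℝ)^2)*μ)).tsum_eq] at h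
    have hP8 : HasSum (fun k : ℕ => ∑ j ∈ Finset.range (k + 1),
        ((-1 : ℝ) ^ j * wgt μ j * ((↑n * x) ^ j / gamRec μ j)) * ((-(2*(1 / (n:ℝ)^2)*μ)) * ((-1 : ℝ) ^ (k - j) * (a (k - j) / gamRec μ (k - j)))))
        ((-(↑n * x) * emu μ (-(↑n * x))) * ((-(2*(1 / (n:ℝ)^2)*μ)) * (Afun μ a (-1)))) := by
      have h := hasSum_sum_range_mul_of_summable_norm
        (f := fun j : ℕ => (-1 : ℝ) ^ j * wgt μ j * ((↑n * x) ^ j / gamRec μ j))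
        (g := fun r : ℕ => (-(2*(1 / (n:ℝ)^2)*μ)) * ((-1 : ℝ) ^ r * (a r / gamRec μ r)))
        (by simp only [Real.norm_eq_abs]
            exact summable_abs_iff.mpr hF4.summable)
        (by simp only [Real.norm_eq_abs]
            exact summable_abs_iff.mpr (hG3.summable.mul_left _))
      rwa [hF4.tsum_eq, (hG3.mul_left (-(2*(1 / (n:ℝ)^2)*μ))).tsum_eq] at h
    have hP9 : HasSum (fun k : ℕ => ∑ j ∈ Finset.range (k + 1),
        ((↑n * x) ^ j / gamRec μ j) * ((((2*lam+3)/(n:ℝ)^2 - 2*x/(n:ℝ)) - 2*(1 / (n:ℝ)^2)*μ) * (wgt μ (k - j) * (a (k - j) / gamRec μ (k - j)))))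
        ((emu μ (↑n * x)) * ((((2*lam+3)/(n:ℝ)^2 - 2*x/(n:ℝ)) - 2*(1 / (n:ℝ)^2)*μ) * (deriv (Afun μ a) 1 + μ * Afun μ a 1 - μ * Afun μ a (-1)))) := by
      have h := hasSum_sum_range_mul_of_summable_norm
        (f := fun j : ℕ => (↑n * x) ^ j / gamRec μ j)
        (g := fun r : ℕ => (((2*lam+3)/(n:ℝ)^2 - 2*x/(n:ℝ)) - 2*(1 / (n:ℝ)^2)*μ) * (wgt μ r * (a r / gamRec μ r)))
        (by simp only [Real.norm_eq_abs]
            exact summable_abs_iff.mpr hF0.summable)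
        (by simp only [Real.norm_eq_abs]
            exact summable_abs_iff.mpr (hG1.summable.mul_left _))
      rwa [hF0.tsum_eq, (hG1.mul_left (((2*lam+3)/(n:ℝ)^2 - 2*x/(n:ℝ)) - 2*(1 / (n:ℝ)^2)*μ)).tsum_eq] at h
    have hP10 : HasSum (fun k : ℕ => ∑ j ∈ Finset.range (k + 1),
        ((-1 : ℝ) ^ j * ((↑n * x) ^ j / gamRec μ j)) * ((2*(1 / (n:ℝ)^2)*μ) * (wgt μ (k - j) * (a (k - j) / gamRec μ (k - j)))))
        ((emu μ (-(↑n * x))) * ((2*(1 / (n:ℝ)^2)*μ) * (deriv (Afun μ a) 1 + μ * Afun μ a 1 - μ * Afun μ a (-1)))) := by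
      have h := hasSum_sum_range_mul_of_summable_norm
        (f := fun j : ℕ => (-1 : ℝ) ^ j * ((↑n * x) ^ j / gamRec μ j))
        (g := fun r : ℕ => (2*(1 / (n:ℝ)^2)*μ) * (wgt μ r * (a r / gamRec μ r)))
        (by simp only [Real.norm_eq_abs]
            exact summable_abs_iff.mpr hF3.summable)
        (by simp only [Real.norm_eq_abs]
            exact summable_abs_iff.mpr (hG1.summable.mul_left _))
      rwa [hF3.tsum_eq, (hG1.mul_left (2*(1 / (n:ℝ)^2)*μ)).tsum_eq] at h
    have hP11 : HasSum (fun k : ℕ => ∑ j ∈ Finset.range (k + 1),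
        (wgt μ j * ((↑n * x) ^ j / gamRec μ j)) * ((2*(1 / (n:ℝ)^2)) * (wgt μ (k - j) * (a (k - j) / gamRec μ (k - j)))))
        ((↑n * x * emu μ (↑n * x)) * ((2*(1 / (n:ℝ)^2)) * (deriv (Afun μ a) 1 + μ * Afun μ a 1 - μ * Afun μ a (-1)))) := by
      have h := hasSum_sum_range_mul_of_summable_norm
        (f := fun j : ℕ => wgt μ j * ((↑n * x) ^ j / gamRec μ j))
        (g := fun r : ℕ => (2*(1 / (n:ℝ)^2)) * (wgt μ r * (a r / gamRec μ r)))
        (by simp only [Real.norm_eq_abs]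
            exact summable_abs_iff.mpr hF1.summable)
        (by simp only [Real.norm_eq_abs]
            exact summable_abs_iff.mpr (hG1.summable.mul_left _))
      rwa [hF1.tsum_eq, (hG1.mul_left (2*(1 / (n:ℝ)^2))).tsum_eq] at h
    have hP12 : HasSum (fun k : ℕ => ∑ j ∈ Finset.range (k + 1),
        ((↑n * x) ^ j / gamRec μ j) * ((2*(1 / (n:ℝ)^2)*μ) * ((-1 : ℝ) ^ (k - j) * wgt μ (k - j) * (a (k - j) / gamRec μ (k - j)))))
        ((emu μ (↑n * x)) * ((2*(1 / (n:ℝ)^2)*μ) * (-deriv (Afun μ a) (-1) + μ * Afun μ a (-1) - μ * Afun μ a 1))) := by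
      have h := hasSum_sum_range_mul_of_summable_norm
        (f := fun j : ℕ => (↑n * x) ^ j / gamRec μ j)
        (g := fun r : ℕ => (2*(1 / (n:ℝ)^2)*μ) * ((-1 : ℝ) ^ r * wgt μ r * (a r / gamRec μ r)))
        (by simp only [Real.norm_eq_abs]
            exact summable_abs_iff.mpr hF0.summable)
        (by simp only [Real.norm_eq_abs]
            exact summable_abs_iff.mpr (hG4.summable.mul_left _))
      rwa [hF0.tsum_eq, (hG4.mul_left (2*(1 / (n:ℝ)^2)*μ)).tsum_eq] at h
    have hP13 : HasSum (fun k : ℕ => ∑ j ∈ Finset.range (k + 1),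
        ((-1 : ℝ) ^ j * ((↑n * x) ^ j / gamRec μ j)) * ((-(2*(1 / (n:ℝ)^2)*μ)) * ((-1 : ℝ) ^ (k - j) * wgt μ (k - j) * (a (k - j) / gamRec μ (k - j)))))
        ((emu μ (-(↑n * x))) * ((-(2*(1 / (n:ℝ)^2)*μ)) * (-deriv (Afun μ a) (-1) + μ * Afun μ a (-1) - μ * Afun μ a 1))) := by
      have h := hasSum_sum_range_mul_of_summable_norm
        (f := fun j : ℕ => (-1 : ℝ) ^ j * ((↑n * x) ^ j / gamRec μ j))
        (g := fun r : ℕ => (-(2*(1 / (n:ℝ)^2)*μ)) * ((-1 : ℝ) ^ r * wgt μ r * (a r / gamRec μ r)))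
        (by simp only [Real.norm_eq_abs]
            exact summable_abs_iff.mpr hF3.summable)
        (by simp only [Real.norm_eq_abs]
            exact summable_abs_iff.mpr (hG4.summable.mul_left _))
      rwa [hF3.tsum_eq, (hG4.mul_left (-(2*(1 / (n:ℝ)^2)*μ))).tsum_eq] at h
    have hP14 : HasSum (fun k : ℕ => ∑ j ∈ Finset.range (k + 1),
        ((↑n * x) ^ j / gamRec μ j) * (((1 / (n:ℝ)^2)) * (wgt μ (k - j) ^ 2 * (a (k - j) / gamRec μ (k - j)))))
        ((emu μ (↑n * x)) * (((1 / (n:ℝ)^2)) * (deriv (deriv (Afun μ a)) 1 + deriv (Afun μ a) 1 + 2 * μ * deriv (Afun μ a) 1 - 2 * μ * -deriv (Afun μ a) (-1) + 2 * μ ^ 2 * Afun μ a 1 - 2 * μ ^ 2 * Afun μ a (-1)))) := by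
      have h := hasSum_sum_range_mul_of_summable_norm
        (f := fun j : ℕ => (↑n * x) ^ j / gamRec μ j)
        (g := fun r : ℕ => ((1 / (n:ℝ)^2)) * (wgt μ r ^ 2 * (a r / gamRec μ r)))
        (by simp only [Real.norm_eq_abs]
            exact summable_abs_iff.mpr hF0.summable)
        (by simp only [Real.norm_eq_abs]
            exact summable_abs_iff.mpr (hG2.summable.mul_left _))
      rwa [hF0.tsum_eq, (hG2.mul_left ((1 / (n:ℝ)^2))).tsum_eq] at h
    have hTsum := ((((((((((((((hP0.add hP1).add hP2).add hP3).add hP4).add hP5).add hP6).add hP7).add hP8).add hP9).add hP10).add hP11).add hP12).add hP13).add hP14)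
    have hTk : ∀ k : ℕ, (∑ j ∈ Finset.range (k + 1),
        (a (k - j) / gamRec μ (k - j) * ((↑n * x) ^ j / gamRec μ j)) * ((1 / (n:ℝ)^2) * wgt μ k ^ 2 + ((2*lam+3)/(n:ℝ)^2 - 2*x/(n:ℝ)) * wgt μ k + ((lam+1)*(lam+2)/(n:ℝ)^2 - 2*x*(lam+1)/(n:ℝ) + x^2)))
        = (∑ j ∈ Finset.range (k + 1), ((↑n * x) ^ j / gamRec μ j) * ((((lam+1)*(lam+2)/(n:ℝ)^2 - 2*x*(lam+1)/(n:ℝ) + x^2) - ((2*lam+3)/(n:ℝ)^2 - 2*x/(n:ℝ))*μ + 4*(1 / (n:ℝ)^2)*μ^2) * (a (k - j) / gamRec μ (k - j)))) +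
          (∑ j ∈ Finset.range (k + 1), ((-1 : ℝ) ^ j * ((↑n * x) ^ j / gamRec μ j)) * ((((2*lam+3)/(n:ℝ)^2 - 2*x/(n:ℝ))*μ - 4*(1 / (n:ℝ)^2)*μ^2) * (a (k - j) / gamRec μ (k - j)))) +
          (∑ j ∈ Finset.range (k + 1), (wgt μ j * ((↑n * x) ^ j / gamRec μ j)) * ((((2*lam+3)/(n:ℝ)^2 - 2*x/(n:ℝ)) - 2*(1 / (n:ℝ)^2)*μ) * (a (k - j) / gamRec μ (k - j)))) +
          (∑ j ∈ Finset.range (k + 1), ((-1 : ℝ) ^ j * wgt μ j * ((↑n * x) ^ j / gamRec μ j)) * ((2*(1 / (n:ℝ)^2)*μ) * (a (k - j) / gamRec μ (k - j)))) +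
          (∑ j ∈ Finset.range (k + 1), (wgt μ j ^ 2 * ((↑n * x) ^ j / gamRec μ j)) * (((1 / (n:ℝ)^2)) * (a (k - j) / gamRec μ (k - j)))) +
          (∑ j ∈ Finset.range (k + 1), ((↑n * x) ^ j / gamRec μ j) * ((((2*lam+3)/(n:ℝ)^2 - 2*x/(n:ℝ))*μ - 4*(1 / (n:ℝ)^2)*μ^2) * ((-1 : ℝ) ^ (k - j) * (a (k - j) / gamRec μ (k - j))))) +
          (∑ j ∈ Finset.range (k + 1), ((-1 : ℝ) ^ j * ((↑n * x) ^ j / gamRec μ j)) * ((-(((2*lam+3)/(n:ℝ)^2 - 2*x/(n:ℝ))*μ) + 4*(1 / (n:ℝ)^2)*μ^2) * ((-1 : ℝ) ^ (k - j) * (a (k - j) / gamRec μ (k - j))))) +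
          (∑ j ∈ Finset.range (k + 1), (wgt μ j * ((↑n * x) ^ j / gamRec μ j)) * ((2*(1 / (n:ℝ)^2)*μ) * ((-1 : ℝ) ^ (k - j) * (a (k - j) / gamRec μ (k - j))))) +
          (∑ j ∈ Finset.range (k + 1), ((-1 : ℝ) ^ j * wgt μ j * ((↑n * x) ^ j / gamRec μ j)) * ((-(2*(1 / (n:ℝ)^2)*μ)) * ((-1 : ℝ) ^ (k - j) * (a (k - j) / gamRec μ (k - j))))) +
          (∑ j ∈ Finset.range (k + 1), ((↑n * x) ^ j / gamRec μ j) * ((((2*lam+3)/(n:ℝ)^2 - 2*x/(n:ℝ)) - 2*(1 / (n:ℝ)^2)*μ) * (wgt μ (k - j) * (a (k - j) / gamRec μ (k - j))))) +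
          (∑ j ∈ Finset.range (k + 1), ((-1 : ℝ) ^ j * ((↑n * x) ^ j / gamRec μ j)) * ((2*(1 / (n:ℝ)^2)*μ) * (wgt μ (k - j) * (a (k - j) / gamRec μ (k - j))))) +
          (∑ j ∈ Finset.range (k + 1), (wgt μ j * ((↑n * x) ^ j / gamRec μ j)) * ((2*(1 / (n:ℝ)^2)) * (wgt μ (k - j) * (a (k - j) / gamRec μ (k - j))))) +
          (∑ j ∈ Finset.range (k + 1), ((↑n * x) ^ j / gamRec μ j) * ((2*(1 / (n:ℝ)^2)*μ) * ((-1 : ℝ) ^ (k - j) * wgt μ (k - j) * (a (k - j) / gamRec μ (k - j))))) +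
          (∑ j ∈ Finset.range (k + 1), ((-1 : ℝ) ^ j * ((↑n * x) ^ j / gamRec μ j)) * ((-(2*(1 / (n:ℝ)^2)*μ)) * ((-1 : ℝ) ^ (k - j) * wgt μ (k - j) * (a (k - j) / gamRec μ (k - j))))) +
          (∑ j ∈ Finset.range (k + 1), ((↑n * x) ^ j / gamRec μ j) * (((1 / (n:ℝ)^2)) * (wgt μ (k - j) ^ 2 * (a (k - j) / gamRec μ (k - j))))) := by
      intro k
      conv_rhs => simp only [← Finset.sum_add_distrib]
      apply Finset.sum_congr rfl
      intro j hj
      have hjk : j ≤ k := Nat.lt_succ_iff.mp (Finset.mem_range.mp hj)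
      have h := hgrid (k - j) j
      rw [Nat.sub_add_cancel hjk] at h
      exact h
    have hterm : ∀ k : ℕ,
        pk μ a k (↑n * x) / gamRec μ k *
          ((n : ℝ) ^ ((k : ℝ) + 2 * μ * theta k + lam + 1) /
            Real.Gamma ((k : ℝ) + 2 * μ * theta k + lam + 1)) *
          ∫ t in Set.Ioi (0 : ℝ),
            Real.exp (-(n : ℝ) * t) * t ^ ((k : ℝ) + 2 * μ * theta k + lam) * (t - x) ^ 2
        = ∑ j ∈ Finset.range (k + 1),
            (a (k - j) / gamRec μ (k - j) * ((↑n * x) ^ j / gamRec μ j)) *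
            ((1 / (n:ℝ)^2) * wgt μ k ^ 2 + ((2*lam+3)/(n:ℝ)^2 - 2*x/(n:ℝ)) * wgt μ k +
              ((lam+1)*(lam+2)/(n:ℝ)^2 - 2*x*(lam+1)/(n:ℝ) + x^2)) := by
      intro k
      have hθ := theta_nonneg k
      have hc0 : 0 ≤ (k:ℝ) + 2*μ*theta k + lam := by positivity
      rw [integral_eval hn x ((k:ℝ) + 2*μ*theta k + lam) hc0]
      have hpk : pk μ a k (↑n * x) / gamRec μ k
          = ∑ j ∈ Finset.range (k + 1),
              a (k - j) / gamRec μ (k - j) * ((↑n * x) ^ j / gamRec μ j) := by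
        rw [pk, Finset.sum_div]
        apply Finset.sum_congr rfl
        intro j hj
        have h1 := (gamRec_pos hμ k).ne'
        have h2 := (gamRec_pos hμ j).ne'
        have h3 := (gamRec_pos hμ (k - j)).ne'
        field_simp
      have hM : ((n : ℝ) ^ ((k : ℝ) + 2 * μ * theta k + lam + 1) /
            Real.Gamma ((k : ℝ) + 2 * μ * theta k + lam + 1)) *
          ((((k:ℝ) + 2*μ*theta k + lam + 1) * ((k:ℝ) + 2*μ*theta k + lam + 2) / (n:ℝ)^2
              - 2*x*((k:ℝ) + 2*μ*theta k + lam + 1)/(n:ℝ) + x^2) *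
            (Real.Gamma ((k:ℝ) + 2*μ*theta k + lam + 1) /
              (n:ℝ) ^ ((k:ℝ) + 2*μ*theta k + lam + 1)))
          = ((1 / (n:ℝ)^2) * wgt μ k ^ 2 + ((2*lam+3)/(n:ℝ)^2 - 2*x/(n:ℝ)) * wgt μ k +
              ((lam+1)*(lam+2)/(n:ℝ)^2 - 2*x*(lam+1)/(n:ℝ) + x^2)) := by
        have hg : Real.Gamma ((k : ℝ) + 2 * μ * theta k + lam + 1) ≠ 0 :=
          ne_of_gt (Real.Gamma_pos_of_pos (by positivity))
        have hp : (n:ℝ) ^ ((k : ℝ) + 2 * μ * theta k + lam + 1) ≠ 0 :=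
          ne_of_gt (Real.rpow_pos_of_pos hn0 _)
        rw [wgt]
        field_simp
        ring
      rw [hpk, mul_assoc, hM, Finset.sum_mul]
    have hEp1 : (1:ℝ) ≤ emu μ ((n:ℝ) * x) := by
      have h := le_hasSum hF0 0 (fun j _ => by
        have := (gamRec_pos hμ j).le
        positivity)
      simpa [gamRec] using h
    have hEp0 : emu μ ((n:ℝ) * x) ≠ 0 := by linarith
    simp only [Dop]
    rw [tsum_congr (fun k => (hterm k).trans (hTk k)), hTsum.tsum_eq]
    field_simp
    ring
  constructor
  · exact hkey
  · intro K hK hKc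
    obtain ⟨X, hX⟩ := hKc.bddAbove
    rw [Metric.tendstoUniformlyOn_iff]
    intro ε hε
    set Q1 : ℝ := |(2 * Afun μ a (-1) - Afun μ a 1) / Afun μ a 1| with hQ1
    set Q2 : ℝ := |2 * μ * ((deriv (Afun μ a) 1 + deriv (Afun μ a) (-1)) / Afun μ a 1) + μ * (2 * lam + 3) * ((Afun μ a 1 - Afun μ a (-1)) / Afun μ a 1)| with hQ2
    set Q3 : ℝ := |deriv (deriv (Afun μ a)) 1 / Afun μ a 1 + 2 * (lam + 2) * (deriv (Afun μ a) 1 / Afun μ a 1) + (lam + 1) * (lam + 2)| with hQ3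
    set Q4 : ℝ := |(Afun μ a 1 - Afun μ a (-1)) / Afun μ a 1| with hQ4
    have hQ1n : 0 ≤ Q1 := hQ1 ▸ abs_nonneg _
    have hQ2n : 0 ≤ Q2 := hQ2 ▸ abs_nonneg _
    have hQ3n : 0 ≤ Q3 := hQ3 ▸ abs_nonneg _
    have hQ4n : 0 ≤ Q4 := hQ4 ▸ abs_nonneg _
    set C : ℝ := 2 * max X 0 * (1 + μ * Q1) + Q2 + Q3 + 2 * μ ^ 2 * Q4 with hC
    have hmX : (0:ℝ) ≤ max X 0 := le_max_right _ _
    have hC0 : 0 ≤ C := by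
      rw [hC]
      have h1 : 0 ≤ μ * Q1 := mul_nonneg hμ hQ1n
      have h2 : 0 ≤ 2 * max X 0 * (1 + μ * Q1) := by positivity
      have h3 : 0 ≤ 2 * μ ^ 2 * Q4 := by positivity
      linarith
    obtain ⟨N, hN⟩ := exists_nat_gt (C / ε)
    filter_upwards [Filter.eventually_ge_atTop (max 1 (N + 1))] with n hn1
    have hn : 1 ≤ n := le_trans (le_max_left _ _) hn1
    have hnN : N + 1 ≤ n := le_trans (le_max_right _ _) hn1
    have hn0 : (0:ℝ) < (n:ℝ) := by exact_mod_cast hn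
    have hn1' : (1:ℝ) ≤ (n:ℝ) := by exact_mod_cast hn
    intro x hxK
    have hx : 0 ≤ x := hK hxK
    have hxX : x ≤ max X 0 := le_trans (hX hxK) (le_max_left _ _)
    simp only [Pi.zero_apply, Real.dist_eq, zero_sub, abs_neg]
    rw [hkey n hn x hx]
    obtain ⟨hF0, hF3, -, -, -⟩ := cside hμ ((n:ℝ) * x)
    have hnx : (0:ℝ) ≤ (n:ℝ) * x := by positivity
    have hEp1 : (1:ℝ) ≤ emu μ ((n:ℝ) * x) := by
      have h := le_hasSum hF0 0 (fun j _ => by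
        have := (gamRec_pos hμ j).le
        positivity)
      simpa [gamRec] using h
    have hEp0 : (0:ℝ) < emu μ ((n:ℝ) * x) := by linarith
    have hEmEp : |emu μ (-((n:ℝ) * x))| ≤ emu μ ((n:ℝ) * x) := by
      rw [abs_le]
      constructor
      · apply hasSum_le _ hF0.neg hF3
        intro k
        rcases Nat.even_or_odd k with hk | hk <;> rw [hk.neg_one_pow]
        · have := (gamRec_pos hμ k).le
          have h2 : 0 ≤ ((n:ℝ)*x) ^ k / gamRec μ k := by positivity
          linarith [h2]
        · simp
      · apply hasSum_le _ hF3 hF0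
        intro k
        rcases Nat.even_or_odd k with hk | hk <;> rw [hk.neg_one_pow]
        · simp
        · have := (gamRec_pos hμ k).le
          have h2 : 0 ≤ ((n:ℝ)*x) ^ k / gamRec μ k := by positivity
          linarith [h2]
    have hratio : |emu μ (-((n:ℝ) * x)) / emu μ ((n:ℝ) * x)| ≤ 1 := by
      rw [abs_div, abs_of_pos hEp0, div_le_one hEp0]
      exact hEmEp
    have hinv2 : (1:ℝ) / (n:ℝ)^2 ≤ 1 / (n:ℝ) := by
      apply div_le_div_of_nonneg_left one_pos.le hn0
      nlinarith
    have hb1 : |(2 * x / ↑n) * (1 + μ * (emu μ (-(↑n * x)) / emu μ (↑n * x)) * ((2 * Afun μ a (-1) - Afun μ a 1) / Afun μ a 1))| ≤ 2 * max X 0 * (1 + μ * Q1) / ↑n := by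
      rw [abs_mul]
      have h1 : |2 * x / (↑n:ℝ)| ≤ 2 * max X 0 / ↑n := by
        rw [abs_of_nonneg (by positivity)]
        gcongr
      have h2 : |1 + μ * (emu μ (-(↑n * x)) / emu μ (↑n * x)) *
          ((2 * Afun μ a (-1) - Afun μ a 1) / Afun μ a 1)| ≤ 1 + μ * Q1 := by
        refine (abs_add_le _ _).trans ?_
        rw [abs_one]
        have hz : |μ * (emu μ (-(↑n * x)) / emu μ (↑n * x)) *
            ((2 * Afun μ a (-1) - Afun μ a 1) / Afun μ a 1)| ≤ μ * Q1 := by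
          rw [abs_mul, abs_mul, abs_of_nonneg hμ, ← hQ1]
          have hmm := mul_le_mul_of_nonneg_left hratio (mul_nonneg hμ hQ1n)
          nlinarith [hmm]
        linarith
      calc |2 * x / (↑n:ℝ)| * |1 + μ * (emu μ (-(↑n * x)) / emu μ (↑n * x)) *
            ((2 * Afun μ a (-1) - Afun μ a 1) / Afun μ a 1)|
          ≤ (2 * max X 0 / ↑n) * (1 + μ * Q1) := by
            apply mul_le_mul h1 h2 (abs_nonneg _) (by positivity)
        _ = 2 * max X 0 * (1 + μ * Q1) / ↑n := by ring
    have hb2 : |(1 / (↑n : ℝ) ^ 2) * (emu μ (-(↑n * x)) / emu μ (↑n * x)) * (2 * μ * ((deriv (Afun μ a) 1 + deriv (Afun μ a) (-1)) / Afun μ a 1) + μ * (2 * lam + 3) * ((Afun μ a 1 - Afun μ a (-1)) / Afun μ a 1))| ≤ Q2 / ↑n := by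
      rw [abs_mul, abs_mul, abs_of_nonneg (show (0:ℝ) ≤ 1/(↑n:ℝ)^2 by positivity), ← hQ2]
      calc 1/(↑n:ℝ)^2 * |emu μ (-(↑n * x)) / emu μ (↑n * x)| * Q2
          ≤ 1/(↑n:ℝ)^2 * 1 * Q2 := by
            apply mul_le_mul_of_nonneg_right
              (mul_le_mul_of_nonneg_left hratio (by positivity)) hQ2n
        _ = Q2 / (↑n:ℝ)^2 := by ring
        _ ≤ Q2 / ↑n := by
            gcongr
            nlinarith
    have hb3 : |(1 / (↑n : ℝ) ^ 2) * (deriv (deriv (Afun μ a)) 1 / Afun μ a 1 + 2 * (lam + 2) * (deriv (Afun μ a) 1 / Afun μ a 1) + (lam + 1) * (lam + 2))| ≤ Q3 / ↑n := by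
      rw [abs_mul, abs_of_nonneg (show (0:ℝ) ≤ 1/(↑n:ℝ)^2 by positivity), ← hQ3]
      calc 1/(↑n:ℝ)^2 * Q3 = Q3 / (↑n:ℝ)^2 := by ring
        _ ≤ Q3 / ↑n := by
            gcongr
            nlinarith
    have hb4 : |(2 * μ ^ 2 / (↑n : ℝ) ^ 2) * ((Afun μ a 1 - Afun μ a (-1)) / Afun μ a 1)| ≤ 2 * μ ^ 2 * Q4 / ↑n := by
      rw [abs_mul, abs_of_nonneg (show (0:ℝ) ≤ 2*μ^2/(↑n:ℝ)^2 by positivity), ← hQ4]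
      calc 2*μ^2/(↑n:ℝ)^2 * Q4 = (2*μ^2*Q4) / (↑n:ℝ)^2 := by ring
        _ ≤ 2*μ^2*Q4 / ↑n := by
            gcongr
            nlinarith
    have habs4 : ∀ p q r s : ℝ, |p + q + r + s| ≤ |p| + |q| + |r| + |s| := by
      intro p q r s
      calc |p + q + r + s| ≤ |p + q + r| + |s| := abs_add_le _ _
        _ ≤ (|p + q| + |r|) + |s| := by linarith [abs_add_le (p + q) r]
        _ ≤ ((|p| + |q|) + |r|) + |s| := by linarith [abs_add_le p q]
    have htot : |(2 * x / ↑n) * (1 + μ * (emu μ (-(↑n * x)) / emu μ (↑n * x)) * ((2 * Afun μ a (-1) - Afun μ a 1) / Afun μ a 1)) + (1 / (↑n : ℝ) ^ 2) * (emu μ (-(↑n * x)) / emu μ (↑n * x)) * (2 * μ * ((deriv (Afun μ a) 1 + deriv (Afun μ a) (-1)) / Afun μ a 1) + μ * (2 * lam + 3) * ((Afun μ a 1 - Afun μ a (-1)) / Afun μ a 1)) + (1 / (↑n : ℝ) ^ 2) * (deriv (deriv (Afun μ a)) 1 / Afun μ a 1 + 2 * (lam + 2) * (deriv (Afun μ a)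 1 / Afun μ a 1) + (lam + 1) * (lam + 2)) + (2 * μ ^ 2 / (↑n : ℝ) ^ 2) * ((Afun μ a 1 - Afun μ a (-1)) / Afun μ a 1)| ≤ C / ↑n := by
      have h := habs4 ((2 * x / ↑n) * (1 + μ * (emu μ (-(↑n * x)) / emu μ (↑n * x)) * ((2 * Afun μ a (-1) - Afun μ a 1) / Afun μ a 1))) ((1 / (↑n : ℝ) ^ 2) * (emu μ (-(↑n * x)) / emu μ (↑n * x)) * (2 * μ * ((deriv (Afun μ a) 1 + deriv (Afun μ a) (-1)) / Afun μ a 1) + μ * (2 * lam + 3) * ((Afun μ a 1 - Afun μ a (-1)) / Afun μ a 1))) ((1 / (↑n : ℝ) ^ 2) * (deriv (deriv (Afun μ a)) 1 / Afun μ a 1 + 2 * (lam + 2) * (deriv (Afun μ a) 1 / Afun μ a 1) + (lam + 1) * (lam + 2))) ((2 * μ ^ 2 / (↑n : ℝ) ^ 2) * ((Afun μ a 1 - Afun μ a (-1)) / Afun μ a 1))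
      have hCn : 2 * max X 0 * (1 + μ * Q1) / (↑n:ℝ) + Q2 / ↑n + Q3 / ↑n + 2 * μ ^ 2 * Q4 / ↑n
          = C / ↑n := by rw [hC]; ring
      linarith [hb1, hb2, hb3, hb4]
    have hClt : C / (↑n:ℝ) < ε := by
      rw [div_lt_iff₀ hn0]
      have hCε : C < ↑N * ε := (div_lt_iff₀ hε).mp hN
      have hNn : (N:ℝ) ≤ (n:ℝ) := by
        have : N ≤ n := le_trans (Nat.le_succ N) hnN
        exact_mod_cast this
      nlinarith
    exact lt_of_le_of_lt htot hClt
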